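/- arXiv:1409.1126 — 4 statements merged into one kernel-verified Lean document; each statement's English description precedes it below -/
import Mathlib

section
/- Let W, V₁, V₂ be Hilbert spaces and let T : W → V₁ × V₂ be a bounded linear operator which is Fredholm, i.e. ker T is finite-dimensional and the range of T is closed and of finite codimension. Let π₁, π₂ denote the projections of V₁ × V₂ onto its two factors, and assume that π₁ ∘ T : W → V₁ is surjective. Let N = ker(π₁ ∘ T) and let S : N → V₂ be the restriction of π₂ ∘ T to N. Then S is Fredholm with the same index as T; more precisely: ker S = ker T, the range of S is closed, and dim(V₂ / range S) = dim((V₁ × V₂) / range T). -/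
/-- Let `T : W → V₁ × V₂` be a bounded, Fredholm operator between Hilbert spaces
(finite-dimensional kernel, closed range of finite codimension) such that `π₁ ∘ T` is
surjective. Let `N = ker(π₁ ∘ T)` and let `S : N → V₂` be the restriction of `π₂ ∘ T` to `N`.
Then `S` is Fredholm with the same index as `T`: `ker S = ker T` (viewed in `W`), the range of
`S` is closed, and `dim(V₂ / range S) = dim((V₁ × V₂) / range T)`. -/
theorem stmt_3 {W V₁ V₂ : Type*}
    [NormedAddCommGroup W] [InnerProductSpace ℝ W] [CompleteSpace W]
    [NormedAddCommGroup V₁] [InnerProductSpace ℝ V₁] [CompleteSpace V₁]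
    [NormedAddCommGroup V₂] [InnerProductSpace ℝ V₂] [CompleteSpace V₂]
    (T : W →L[ℝ] V₁ × V₂)
    (hker : FiniteDimensional ℝ (LinearMap.ker (T : W →ₗ[ℝ] V₁ × V₂)))
    (hclosed : IsClosed (LinearMap.range (T : W →ₗ[ℝ] V₁ × V₂) : Set (V₁ × V₂)))
    (hcoker : FiniteDimensional ℝ ((V₁ × V₂) ⧸ LinearMap.range (T : W →ₗ[ℝ] V₁ × V₂)))
    (hsurj : Function.Surjective ((ContinuousLinearMap.fst ℝ V₁ V₂).comp T))
    (N : Submodule ℝ W) (hN : N = LinearMap.ker (((ContinuousLinearMap.fst ℝ V₁ V₂).comp T : W →L[ℝ] V₁) : W →ₗ[ℝ] V₁))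
    (S : N →L[ℝ] V₂) (hS : S = ((ContinuousLinearMap.snd ℝ V₁ V₂).comp T).comp N.subtypeL) :
    Submodule.map N.subtype (LinearMap.ker (S : N →ₗ[ℝ] V₂)) = LinearMap.ker (T : W →ₗ[ℝ] V₁ × V₂) ∧
    IsClosed (LinearMap.range (S : N →ₗ[ℝ] V₂) : Set V₂) ∧
    FiniteDimensional ℝ (V₂ ⧸ LinearMap.range (S : N →ₗ[ℝ] V₂)) ∧
    Module.finrank ℝ (V₂ ⧸ LinearMap.range (S : N →ₗ[ℝ] V₂)) =
      Module.finrank ℝ ((V₁ × V₂) ⧸ LinearMap.range (T : W →ₗ[ℝ] V₁ × V₂)) := by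
  -- membership in N
  have hNmem : ∀ x : W, x ∈ N ↔ (T x).1 = 0 := by
    intro x; rw [hN]; simp [LinearMap.mem_ker]
  have hSval : ∀ x : N, S x = (T (x : W)).2 := by
    intro x; rw [hS]; rfl
  -- key: range S = {v₂ | (0, v₂) ∈ range T}
  have hrange : ∀ v : V₂, v ∈ LinearMap.range (S : N →ₗ[ℝ] V₂) ↔ ((0 : V₁), v) ∈ LinearMap.range (T : W →ₗ[ℝ] V₁ × V₂) := by
    intro v
    constructor
    · rintro ⟨x, rfl⟩
      refine ⟨(x : W), ?_⟩
      have h1 : (T (x : W)).1 = 0 := (hNmem x).1 x.2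
      exact Prod.ext h1 (hSval x).symm
    · rintro ⟨w, hw⟩
      have hw1 : (T w).1 = 0 := by simp only [ContinuousLinearMap.coe_coe] at hw; rw [hw]
      refine ⟨⟨w, (hNmem w).2 hw1⟩, ?_⟩
      simp only [ContinuousLinearMap.coe_coe] at hw ⊢; rw [hSval, hw]
  -- 1. kernel
  have hker1 : Submodule.map N.subtype (LinearMap.ker (S : N →ₗ[ℝ] V₂)) = LinearMap.ker (T : W →ₗ[ℝ] V₁ × V₂) := by
    ext w
    simp only [Submodule.mem_map, LinearMap.mem_ker]
    constructor
    · rintro ⟨x, hx, rfl⟩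
      have h1 : (T (x : W)).1 = 0 := (hNmem x).1 x.2
      have h2 : (T (x : W)).2 = 0 := by rw [← hSval x]; exact hx
      exact Prod.ext h1 h2
    · intro hw
      have h1 : (T w).1 = 0 := by simp only [ContinuousLinearMap.coe_coe] at hw; simp [hw]
      refine ⟨⟨w, (hNmem w).2 h1⟩, ?_, rfl⟩
      simp only [ContinuousLinearMap.coe_coe] at hw ⊢; simp [hSval, hw]
  -- 2. closed range
  have hclosedS : IsClosed (LinearMap.range (S : N →ₗ[ℝ] V₂) : Set V₂) := by
    have : (LinearMap.range (S : N →ₗ[ℝ] V₂) : Set V₂) =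
        (fun v : V₂ => ((0 : V₁), v)) ⁻¹' (LinearMap.range (T : W →ₗ[ℝ] V₁ × V₂) : Set (V₁ × V₂)) := by
      ext v; exact hrange v
    rw [this]
    exact hclosed.preimage (by continuity)
  -- 3. equivalence of cokernels
  set f : V₂ →ₗ[ℝ] (V₁ × V₂) ⧸ LinearMap.range (T : W →ₗ[ℝ] V₁ × V₂) :=
    (LinearMap.range (T : W →ₗ[ℝ] V₁ × V₂)).mkQ.comp (LinearMap.inr ℝ V₁ V₂) with hf
  have hfker : LinearMap.ker f = LinearMap.range (S : N →ₗ[ℝ] V₂) := by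
    ext v
    simp only [hf, LinearMap.mem_ker, LinearMap.comp_apply, LinearMap.inr_apply,
      Submodule.mkQ_apply, Submodule.Quotient.mk_eq_zero]
    exact (hrange v).symm
  have hfsurj : Function.Surjective f := by
    intro q
    obtain ⟨p, rfl⟩ := Submodule.mkQ_surjective _ q
    obtain ⟨w, hw⟩ := hsurj p.1
    refine ⟨p.2 - (T w).2, ?_⟩
    simp only [hf, LinearMap.comp_apply, LinearMap.inr_apply, Submodule.mkQ_apply]
    rw [Submodule.Quotient.eq]
    refine ⟨-w, ?_⟩
    have hw1 : (T w).1 = p.1 := hw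
    apply Prod.ext <;> simp [hw1]
  let e : (V₂ ⧸ LinearMap.range (S : N →ₗ[ℝ] V₂)) ≃ₗ[ℝ] ((V₁ × V₂) ⧸ LinearMap.range (T : W →ₗ[ℝ] V₁ × V₂)) :=
    (Submodule.quotEquivOfEq _ _ hfker.symm).trans (f.quotKerEquivOfSurjective hfsurj)
  exact ⟨hker1, hclosedS, Module.Finite.equiv e.symm, e.finrank_eq⟩
end

section
/- Let ε > 0 and let f : ℝ² → ℝ be continuously differentiable with support contained in the rectangle [0,1] × [0,ε]. Then ∫_{ℝ²} f(x,y)⁴ dx dy ≤ ε · ( ∫_{ℝ²} (∂₁f)² dx dy ) · ( ∫_{ℝ²} (∂₂f)² dx dy ); in particular ∫_{ℝ²} f⁴ ≤ ε · ( ∫_{ℝ²} ‖∇f‖² )². -/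
open MeasureTheory Filter

lemma my_cs {S : Set ℝ} (hfin : MeasureTheory.volume S ≠ ⊤) {h : ℝ → ℝ}
    (hc : Continuous h) (hk : HasCompactSupport h) :
    (∫ s in S, |h s|) ^ 2 ≤ (MeasureTheory.volume S).toReal * ∫ s in S, (h s) ^ 2 := by
  haveI : IsFiniteMeasure (volume.restrict S) :=
    ⟨by rw [Measure.restrict_apply_univ]; exact hfin.lt_top⟩
  have hpq : Real.HolderConjugate 2 2 := by
    constructor <;> norm_num
  have hmem : MemLp (fun s => |h s|) (ENNReal.ofReal 2) (volume.restrict S) := by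
    have : MemLp (fun s => |h s|) (ENNReal.ofReal 2) volume :=
      (hc.abs).memLp_of_hasCompactSupport (hk.abs)
    exact this.restrict S
  have hone : MemLp (fun _ : ℝ => (1 : ℝ)) (ENNReal.ofReal 2) (volume.restrict S) :=
    memLp_const 1
  have key := MeasureTheory.integral_mul_le_Lp_mul_Lq_of_nonneg hpq
    (Filter.Eventually.of_forall fun s => abs_nonneg (h s))
    (Filter.Eventually.of_forall fun _ => zero_le_one) hmem hone
  simp only [mul_one] at key
  have h2 : ∀ s, |h s| ^ (2:ℝ) = (h s) ^ 2 := by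
    intro s
    rw [show ((2:ℝ)) = ((2:ℕ):ℝ) by norm_num, Real.rpow_natCast, sq_abs]
  rw [show (∫ s in S, |h s| ^ (2:ℝ) ∂volume) = ∫ s in S, (h s)^2 by
        exact integral_congr_ae (Filter.Eventually.of_forall fun s => h2 s)] at key
  simp only [Real.one_rpow, integral_const, smul_eq_mul, mul_one] at key
  rw [measureReal_def, Measure.restrict_apply_univ] at key
  have hInt2 : 0 ≤ ∫ s in S, (h s)^2 := integral_nonneg fun s => sq_nonneg _
  have habs : 0 ≤ ∫ s in S, |h s| := integral_nonneg fun s => abs_nonneg _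
  calc (∫ s in S, |h s|) ^ 2
      ≤ ((∫ s in S, (h s)^2) ^ (1/(2:ℝ)) * (volume S).toReal ^ (1/(2:ℝ)))^2 := by
        apply pow_le_pow_left₀ habs key
    _ = (volume S).toReal * ∫ s in S, (h s)^2 := by
        rw [mul_pow, ← Real.rpow_natCast ((∫ s in S, (h s)^2) ^ (1/(2:ℝ))) 2,
          ← Real.rpow_natCast ((volume S).toReal ^ (1/(2:ℝ))) 2,
          ← Real.rpow_mul hInt2, ← Real.rpow_mul ENNReal.toReal_nonneg]
        norm_num
        rw [mul_comm]


/-- For `ε > 0` and `f : ℝ² → ℝ` continuously differentiable with support in the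
rectangle `[0,1] × [0,ε]`, one has the anisotropic Ladyzhenskaya-type inequality
`∫ f⁴ ≤ ε (∫ (∂₁f)²)(∫ (∂₂f)²)`, and in particular `∫ f⁴ ≤ ε (∫ ‖∇f‖²)²` where
`‖∇f‖² = (∂₁f)² + (∂₂f)²`. -/
theorem stmt_6 (ε : ℝ) (hε : 0 < ε) (f : ℝ × ℝ → ℝ) (hf : ContDiff ℝ 1 f)
    (hsupp : Function.support f ⊆ Set.Icc 0 1 ×ˢ Set.Icc 0 ε) :
    (∫ p : ℝ × ℝ, f p ^ 4)
        ≤ ε * (∫ p : ℝ × ℝ, (fderiv ℝ f p (1, 0)) ^ 2)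
            * (∫ p : ℝ × ℝ, (fderiv ℝ f p (0, 1)) ^ 2) ∧
    (∫ p : ℝ × ℝ, f p ^ 4)
        ≤ ε * (∫ p : ℝ × ℝ, ((fderiv ℝ f p (1, 0)) ^ 2 + (fderiv ℝ f p (0, 1)) ^ 2)) ^ 2 := by
  classical
  set K : Set (ℝ × ℝ) := Set.Icc 0 1 ×ˢ Set.Icc 0 ε with hK
  have hKcl : IsClosed K := (isClosed_Icc).prod isClosed_Icc
  have hKcp : IsCompact K := (isCompact_Icc).prod isCompact_Icc
  have htsup : tsupport f ⊆ K := closure_minimal hsupp hKcl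
  set g₁ : ℝ × ℝ → ℝ := fun p => fderiv ℝ f p (1, 0) with hg₁
  set g₂ : ℝ × ℝ → ℝ := fun p => fderiv ℝ f p (0, 1) with hg₂
  have hfc : Continuous f := hf.continuous
  have hfd : Differentiable ℝ f := hf.differentiable one_ne_zero
  have hdc : Continuous (fderiv ℝ f) := hf.continuous_fderiv one_ne_zero
  have hg₁c : Continuous g₁ := hdc.clm_apply continuous_const
  have hg₂c : Continuous g₂ := hdc.clm_apply continuous_const
  have hderiv0 : ∀ p ∉ K, fderiv ℝ f p = 0 := by
    intro p hp
    have : p ∉ tsupport f := fun h => hp (htsup h)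
    have : p ∉ Function.support (fderiv ℝ f) := fun h => this (support_fderiv_subset ℝ h)
    simpa [Function.mem_support, not_not] using this
  have hg₁0 : ∀ p ∉ K, g₁ p = 0 := fun p hp => by
    simp [hg₁, hderiv0 p hp]
  have hg₂0 : ∀ p ∉ K, g₂ p = 0 := fun p hp => by
    simp [hg₂, hderiv0 p hp]
  have hf0 : ∀ p ∉ K, f p = 0 := by
    intro p hp
    by_contra h
    exact hp (hsupp h)
  have hg₁cs : HasCompactSupport g₁ := HasCompactSupport.intro hKcp hg₁0
  have hg₂cs : HasCompactSupport g₂ := HasCompactSupport.intro hKcp hg₂0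
  have hfcs : HasCompactSupport f := HasCompactSupport.intro hKcp hf0
  -- sections
  have hsec₁c : ∀ y : ℝ, Continuous (fun s => g₁ (s, y)) := fun y =>
    hg₁c.comp (continuous_id.prodMk continuous_const)
  have hsec₂c : ∀ x : ℝ, Continuous (fun t => g₂ (x, t)) := fun x =>
    hg₂c.comp (continuous_const.prodMk continuous_id)
  have hsec₁cs : ∀ y : ℝ, HasCompactSupport (fun s => g₁ (s, y)) := by
    intro y
    apply HasCompactSupport.intro (isCompact_Icc (a := (0:ℝ)) (b := 1))
    intro s hs
    exact hg₁0 _ (fun h => hs (Set.mem_prod.mp h).1)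
  have hsec₂cs : ∀ x : ℝ, HasCompactSupport (fun t => g₂ (x, t)) := by
    intro x
    apply HasCompactSupport.intro (isCompact_Icc (a := (0:ℝ)) (b := ε))
    intro t ht
    exact hg₂0 _ (fun h => ht (Set.mem_prod.mp h).2)
  -- pointwise bound 1
  have hbd₁ : ∀ x y : ℝ, (f (x, y)) ^ 2 ≤ ∫ s, (g₁ (s, y)) ^ 2 := by
    intro x y
    have hint_sq : Integrable (fun s => (g₁ (s, y)) ^ 2) :=
      ((hsec₁c y).pow 2).integrable_of_hasCompactSupport ((hsec₁cs y).mul_left)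
    have hRnn : 0 ≤ ∫ s, (g₁ (s, y)) ^ 2 := integral_nonneg fun s => sq_nonneg _
    by_cases hx : (-1 : ℝ) ≤ x
    · -- FTC
      have hder : ∀ t : ℝ, HasDerivAt (fun s => f (s, y)) (g₁ (t, y)) t := by
        intro t
        exact (hfd (t, y)).hasFDerivAt.comp_hasDerivAt t
          ((hasDerivAt_id t).prodMk (hasDerivAt_const t y))
      have hftc : (∫ t in (-1 : ℝ)..x, g₁ (t, y)) = f (x, y) - f (-1, y) :=
        intervalIntegral.integral_eq_sub_of_hasDerivAt (fun t _ => hder t)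
          ((hsec₁c y).intervalIntegrable _ _)
      have hfm1 : f (-1, y) = 0 := by
        apply hf0
        intro h
        have h1 := (Set.mem_prod.mp h).1
        simp [Set.mem_Icc] at h1
        linarith
      have habs : |f (x, y)| ≤ ∫ s in Set.Icc (0:ℝ) 1, |g₁ (s, y)| := by
        have h1 : |f (x, y)| ≤ ∫ t in (-1 : ℝ)..x, |g₁ (t, y)| := by
          rw [show f (x, y) = ∫ t in (-1 : ℝ)..x, g₁ (t, y) by rw [hftc, hfm1, sub_zero]]
          exact intervalIntegral.abs_integral_le_integral_abs hx
        have h2 : (∫ t in (-1 : ℝ)..x, |g₁ (t, y)|) = ∫ t in Set.Ioc (-1:ℝ) x, |g₁ (t, y)| :=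
          intervalIntegral.integral_of_le hx
        have habs_int : Integrable (fun s => |g₁ (s, y)|) :=
          ((hsec₁c y).abs).integrable_of_hasCompactSupport ((hsec₁cs y).abs)
        have h3 : (∫ t in Set.Ioc (-1:ℝ) x, |g₁ (t, y)|) ≤ ∫ s, |g₁ (s, y)| :=
          setIntegral_le_integral habs_int (Eventually.of_forall fun s => abs_nonneg _)
        have h4 : (∫ s, |g₁ (s, y)|) = ∫ s in Set.Icc (0:ℝ) 1, |g₁ (s, y)| := by
          symm
          apply setIntegral_eq_integral_of_forall_compl_eq_zero
          intro s hs
          rw [hg₁0 (s, y) (fun h => hs (Set.mem_prod.mp h).1), abs_zero]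
        linarith [h1, h2 ▸ h1]
      calc (f (x, y)) ^ 2 = |f (x, y)| ^ 2 := (sq_abs _).symm
        _ ≤ (∫ s in Set.Icc (0:ℝ) 1, |g₁ (s, y)|) ^ 2 := by
            apply pow_le_pow_left₀ (abs_nonneg _) habs
        _ ≤ (volume (Set.Icc (0:ℝ) 1)).toReal * ∫ s in Set.Icc (0:ℝ) 1, (g₁ (s, y)) ^ 2 :=
            my_cs (by simp) (hsec₁c y) (hsec₁cs y)
        _ = ∫ s in Set.Icc (0:ℝ) 1, (g₁ (s, y)) ^ 2 := by
            rw [Real.volume_Icc]; norm_num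
        _ ≤ ∫ s, (g₁ (s, y)) ^ 2 :=
            setIntegral_le_integral hint_sq (Eventually.of_forall fun s => sq_nonneg _)
    · have : f (x, y) = 0 := by
        apply hf0
        intro h
        have h1 := (Set.mem_prod.mp h).1
        simp [Set.mem_Icc] at h1
        linarith [h1.1]
      rw [this]
      simpa using hRnn
  -- pointwise bound 2
  have hbd₂ : ∀ x y : ℝ, (f (x, y)) ^ 2 ≤ ε * ∫ t, (g₂ (x, t)) ^ 2 := by
    intro x y
    have hint_sq : Integrable (fun t => (g₂ (x, t)) ^ 2) :=
      ((hsec₂c x).pow 2).integrable_of_hasCompactSupport ((hsec₂cs x).mul_left)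
    have hRnn : 0 ≤ ∫ t, (g₂ (x, t)) ^ 2 := integral_nonneg fun t => sq_nonneg _
    by_cases hy : (-1 : ℝ) ≤ y
    · have hder : ∀ t : ℝ, HasDerivAt (fun u => f (x, u)) (g₂ (x, t)) t := by
        intro t
        exact (hfd (x, t)).hasFDerivAt.comp_hasDerivAt t
          ((hasDerivAt_const t x).prodMk (hasDerivAt_id t))
      have hftc : (∫ t in (-1 : ℝ)..y, g₂ (x, t)) = f (x, y) - f (x, -1) :=
        intervalIntegral.integral_eq_sub_of_hasDerivAt (fun t _ => hder t)
          ((hsec₂c x).intervalIntegrable _ _)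
      have hfm1 : f (x, -1) = 0 := by
        apply hf0
        intro h
        have h1 := (Set.mem_prod.mp h).2
        simp [Set.mem_Icc] at h1
        linarith
      have habs : |f (x, y)| ≤ ∫ t in Set.Icc (0:ℝ) ε, |g₂ (x, t)| := by
        have h1 : |f (x, y)| ≤ ∫ t in (-1 : ℝ)..y, |g₂ (x, t)| := by
          rw [show f (x, y) = ∫ t in (-1 : ℝ)..y, g₂ (x, t) by rw [hftc, hfm1, sub_zero]]
          exact intervalIntegral.abs_integral_le_integral_abs hy
        have h2 : (∫ t in (-1 : ℝ)..y, |g₂ (x, t)|) = ∫ t in Set.Ioc (-1:ℝ) y, |g₂ (x, t)| :=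
          intervalIntegral.integral_of_le hy
        have habs_int : Integrable (fun t => |g₂ (x, t)|) :=
          ((hsec₂c x).abs).integrable_of_hasCompactSupport ((hsec₂cs x).abs)
        have h3 : (∫ t in Set.Ioc (-1:ℝ) y, |g₂ (x, t)|) ≤ ∫ t, |g₂ (x, t)| :=
          setIntegral_le_integral habs_int (Eventually.of_forall fun t => abs_nonneg _)
        have h4 : (∫ t, |g₂ (x, t)|) = ∫ t in Set.Icc (0:ℝ) ε, |g₂ (x, t)| := by
          symm
          apply setIntegral_eq_integral_of_forall_compl_eq_zero
          intro t ht
          rw [hg₂0 (x, t) (fun h => ht (Set.mem_prod.mp h).2), abs_zero]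
        linarith [h1, h2 ▸ h1]
      calc (f (x, y)) ^ 2 = |f (x, y)| ^ 2 := (sq_abs _).symm
        _ ≤ (∫ t in Set.Icc (0:ℝ) ε, |g₂ (x, t)|) ^ 2 := by
            apply pow_le_pow_left₀ (abs_nonneg _) habs
        _ ≤ (volume (Set.Icc (0:ℝ) ε)).toReal * ∫ t in Set.Icc (0:ℝ) ε, (g₂ (x, t)) ^ 2 :=
            my_cs (by simp) (hsec₂c x) (hsec₂cs x)
        _ ≤ ε * ∫ t, (g₂ (x, t)) ^ 2 := by
            rw [Real.volume_Icc]
            have : (ENNReal.ofReal (ε - 0)).toReal = ε := by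
              rw [ENNReal.toReal_ofReal (by linarith)]; ring
            rw [this]
            apply mul_le_mul_of_nonneg_left _ hε.le
            exact setIntegral_le_integral hint_sq (Eventually.of_forall fun t => sq_nonneg _)
    · have : f (x, y) = 0 := by
        apply hf0
        intro h
        have h1 := (Set.mem_prod.mp h).2
        simp [Set.mem_Icc] at h1
        linarith [h1.1]
      rw [this]
      have := mul_nonneg hε.le hRnn
      simpa using this
  -- global integrability
  have hq₁int : Integrable (fun p : ℝ × ℝ => (g₁ p) ^ 2) :=
    (hg₁c.pow 2).integrable_of_hasCompactSupport (hg₁cs.mul_left)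
  have hq₂int : Integrable (fun p : ℝ × ℝ => (g₂ p) ^ 2) :=
    (hg₂c.pow 2).integrable_of_hasCompactSupport (hg₂cs.mul_left)
  have hf4int : Integrable (fun p : ℝ × ℝ => (f p) ^ 4) :=
    (hfc.pow 4).integrable_of_hasCompactSupport (by
      apply HasCompactSupport.intro hKcp
      intro p hp; rw [Pi.pow_apply, hf0 p hp]; ring)
  set G : ℝ → ℝ := fun y => ∫ s, (g₁ (s, y)) ^ 2 with hG
  set H : ℝ → ℝ := fun x => ∫ t, (g₂ (x, t)) ^ 2 with hH
  have hvol : (volume : Measure (ℝ × ℝ)) = (volume : Measure ℝ).prod volume :=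
    MeasureTheory.Measure.volume_eq_prod ℝ ℝ
  have hq₁int' : Integrable (fun p : ℝ × ℝ => (g₁ p) ^ 2) ((volume : Measure ℝ).prod volume) := by
    rwa [← hvol]
  have hq₂int' : Integrable (fun p : ℝ × ℝ => (g₂ p) ^ 2) ((volume : Measure ℝ).prod volume) := by
    rwa [← hvol]
  have hGint : Integrable G := hq₁int'.integral_prod_right
  have hHint : Integrable H := hq₂int'.integral_prod_left
  have hGnn : ∀ y, 0 ≤ G y := fun y => integral_nonneg fun s => sq_nonneg _
  have hHnn : ∀ x, 0 ≤ H x := fun x => integral_nonneg fun t => sq_nonneg _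
  have hGsum : (∫ y, G y) = ∫ p : ℝ × ℝ, (g₁ p) ^ 2 := by
    rw [hvol, MeasureTheory.integral_prod_symm _ hq₁int']
  have hHsum : (∫ x, H x) = ∫ p : ℝ × ℝ, (g₂ p) ^ 2 := by
    rw [hvol, MeasureTheory.integral_prod _ hq₂int']
  have hprodint : Integrable (fun p : ℝ × ℝ => H p.1 * G p.2) := by
    rw [hvol]
    exact hHint.mul_prod hGint
  have hmain : (∫ p : ℝ × ℝ, f p ^ 4) ≤ ε * ((∫ x, H x) * (∫ y, G y)) := by
    have step : (∫ p : ℝ × ℝ, f p ^ 4) ≤ ∫ p : ℝ × ℝ, ε * (H p.1 * G p.2) := by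
      apply integral_mono hf4int (hprodint.const_mul ε)
      rintro ⟨x, y⟩
      show f (x, y) ^ 4 ≤ ε * (H x * G y)
      have h1 := hbd₁ x y
      have h2 := hbd₂ x y
      calc f (x, y) ^ 4 = (f (x, y)) ^ 2 * (f (x, y)) ^ 2 := by ring
        _ ≤ G y * (ε * H x) := mul_le_mul h1 h2 (sq_nonneg _) (hGnn y)
        _ = ε * (H x * G y) := by ring
    have hps : (∫ p : ℝ × ℝ, H p.1 * G p.2) = (∫ x, H x) * (∫ y, G y) := by
      rw [hvol]
      exact integral_prod_mul H G
    rw [integral_const_mul, hps] at step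
    exact step
  constructor
  · calc (∫ p : ℝ × ℝ, f p ^ 4) ≤ ε * ((∫ x, H x) * (∫ y, G y)) := hmain
      _ = ε * (∫ p : ℝ × ℝ, (g₁ p) ^ 2) * (∫ p : ℝ × ℝ, (g₂ p) ^ 2) := by
          rw [hGsum, hHsum]; ring
  · have hA : (0:ℝ) ≤ ∫ p : ℝ × ℝ, (g₁ p) ^ 2 := integral_nonneg fun p => sq_nonneg _
    have hB : (0:ℝ) ≤ ∫ p : ℝ × ℝ, (g₂ p) ^ 2 := integral_nonneg fun p => sq_nonneg _
    have hsum : (∫ p : ℝ × ℝ, ((g₁ p) ^ 2 + (g₂ p) ^ 2))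
        = (∫ p : ℝ × ℝ, (g₁ p) ^ 2) + (∫ p : ℝ × ℝ, (g₂ p) ^ 2) :=
      integral_add hq₁int hq₂int
    calc (∫ p : ℝ × ℝ, f p ^ 4)
        ≤ ε * ((∫ x, H x) * (∫ y, G y)) := hmain
      _ = ε * ((∫ p : ℝ × ℝ, (g₁ p) ^ 2) * (∫ p : ℝ × ℝ, (g₂ p) ^ 2)) := by
          rw [hGsum, hHsum]; ring
      _ ≤ ε * ((∫ p : ℝ × ℝ, (g₁ p) ^ 2) + (∫ p : ℝ × ℝ, (g₂ p) ^ 2)) ^ 2 := by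
          apply mul_le_mul_of_nonneg_left _ hε.le
          nlinarith [hA, hB, sq_nonneg ((∫ p : ℝ × ℝ, (g₁ p) ^ 2) - (∫ p : ℝ × ℝ, (g₂ p) ^ 2))]
      _ = ε * (∫ p : ℝ × ℝ, ((g₁ p) ^ 2 + (g₂ p) ^ 2)) ^ 2 := by rw [hsum]
end

section
/- Let V, W, V', W' be Hilbert spaces. Let A_i : V → W and A'_i : V' → W' be uniformly bounded sequences of bounded linear operators converging pointwise to bounded operators A and A' respectively, and assume the adjoints A_i* converge pointwise to A*. Let K_i : W → V' be a sequence of compact operators converging in operator norm to K : W → V'. Then A'_i ∘ K_i ∘ A_i converges to A' ∘ K ∘ A in operator norm. -/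
open Filter Metric


section Aux

/-- Total boundedness from existence of Cauchy subsequences. -/
lemma totallyBounded_of_cauchy_subseq {X : Type*} [UniformSpace X] {s : Set X}
    (h : ∀ u : ℕ → X, (∀ n, u n ∈ s) → ∃ φ : ℕ → ℕ, StrictMono φ ∧ CauchySeq (u ∘ φ)) :
    TotallyBounded s := by
  intro V V_in
  by_contra hcon
  have hcon' : ∀ t : Set X, t.Finite → ¬ s ⊆ ⋃ y ∈ t, {x | (x, y) ∈ V} :=
    fun t ht hsub => hcon ⟨t, ht, hsub⟩
  obtain ⟨u, u_in, hu⟩ : ∃ u : ℕ → X, (∀ n, u n ∈ s) ∧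
      ∀ n m, m < n → u m ∉ UniformSpace.ball (u n) V := by
    simp only [Set.not_subset, Set.mem_iUnion₂, not_exists, exists_prop] at hcon'
    have hseq := Set.seq_of_forall_finite_exists hcon'
    simp only [forall_and, Set.forall_mem_image, not_and] at hseq
    obtain ⟨u, hu1, hu2⟩ := hseq
    exact ⟨u, hu1, fun n m hmn => hu2 n hmn⟩
  obtain ⟨φ, hφ, hc⟩ := h u u_in
  obtain ⟨N, hN⟩ := hc.mem_entourage V_in
  exact hu (φ (N + 1)) (φ N) (hφ (Nat.lt_succ_self N)) (hN (N + 1) N (Nat.le_succ N) le_rfl)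

variable {W V' : Type*}
    [NormedAddCommGroup W] [InnerProductSpace ℝ W] [CompleteSpace W]
    [NormedAddCommGroup V'] [InnerProductSpace ℝ V'] [CompleteSpace V']

/-- Schauder's theorem for Hilbert spaces: the adjoint of a compact operator is compact. -/
lemma adjoint_isCompactOperator (K : W →L[ℝ] V') (hK : IsCompactOperator ⇑K) :
    IsCompactOperator ⇑(ContinuousLinearMap.adjoint K) := by
  set Ks := ContinuousLinearMap.adjoint K with hKs
  -- K ∘ K* is compact
  have hKKs : IsCompactOperator (⇑K ∘ ⇑Ks) := hK.comp_clm Ks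
  have hKKs' : IsCompactOperator ⇑((K.comp Ks : V' →L[ℝ] V')) := hKKs
  suffices hcpt : IsCompact (closure (⇑Ks '' closedBall (0 : V') 1)) by
    exact (isCompactOperator_iff_isCompact_closure_image_closedBall (𝕜₁ := ℝ)
      (f := (Ks : V' →ₗ[ℝ] W)) one_pos).2 hcpt
  have htb : TotallyBounded (⇑Ks '' closedBall (0 : V') 1) := by
    apply totallyBounded_of_cauchy_subseq
    rintro u hu
    choose v hv hvu using hu
    -- the sequence K K* v n lies in a compact set
    have hScpt : IsCompact (closure (⇑(K.comp Ks) '' closedBall (0 : V') 1)) :=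
      hKKs'.isCompact_closure_image_closedBall (𝕜₁ := ℝ) (f := ((K.comp Ks) : V' →ₗ[ℝ] V')) 1
    have hmem : ∀ n, (K.comp Ks) (v n) ∈ closure (⇑(K.comp Ks) '' closedBall (0 : V') 1) :=
      fun n => subset_closure ⟨v n, hv n, rfl⟩
    obtain ⟨x, _, φ, hφ, hconv⟩ := hScpt.isSeqCompact hmem
    refine ⟨φ, hφ, ?_⟩
    have hcs : CauchySeq (fun n => (K.comp Ks) (v (φ n))) := hconv.cauchySeq
    rw [Metric.cauchySeq_iff] at hcs ⊢
    intro ε hε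
    obtain ⟨N, hN⟩ := hcs (ε ^ 2 / 2) (by positivity)
    refine ⟨N, fun m hm n hn => ?_⟩
    have key : dist ((u ∘ φ) m) ((u ∘ φ) n) ^ 2 ≤
        2 * dist ((K.comp Ks) (v (φ m))) ((K.comp Ks) (v (φ n))) := by
      have h1 : (u ∘ φ) m = Ks (v (φ m)) := (hvu (φ m)).symm
      have h2 : (u ∘ φ) n = Ks (v (φ n)) := (hvu (φ n)).symm
      rw [h1, h2, dist_eq_norm, dist_eq_norm, ← map_sub, ← map_sub]
      set z := v (φ m) - v (φ n) with hz
      have hinner : ‖Ks z‖ ^ 2 = inner ℝ (z : V') (K (Ks z)) := by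
        rw [← real_inner_self_eq_norm_sq]
        rw [hKs, ContinuousLinearMap.adjoint_inner_left]
      have hzle : ‖z‖ ≤ 2 := by
        have h1 : ‖v (φ m)‖ ≤ 1 := by simpa using hv (φ m)
        have h2 : ‖v (φ n)‖ ≤ 1 := by simpa using hv (φ n)
        calc ‖z‖ ≤ ‖v (φ m)‖ + ‖v (φ n)‖ := norm_sub_le _ _
          _ ≤ 2 := by linarith
      calc ‖Ks z‖ ^ 2 = inner ℝ (z : V') (K (Ks z)) := hinner
        _ ≤ ‖z‖ * ‖K (Ks z)‖ := real_inner_le_norm _ _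
        _ ≤ 2 * ‖K (Ks z)‖ := by
            have := norm_nonneg (K (Ks z))
            nlinarith
    have hd := hN m hm n hn
    have : dist ((u ∘ φ) m) ((u ∘ φ) n) ^ 2 < ε ^ 2 := by
      calc dist ((u ∘ φ) m) ((u ∘ φ) n) ^ 2 ≤
          2 * dist ((K.comp Ks) (v (φ m))) ((K.comp Ks) (v (φ n))) := key
        _ < 2 * (ε ^ 2 / 2) := by linarith
        _ = ε ^ 2 := by ring
    exact lt_of_pow_lt_pow_left₀ 2 hε.le this
  have : TotallyBounded (closure (⇑Ks '' closedBall (0 : V') 1)) := htb.closure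
  exact TotallyBounded.isCompact_of_isClosed this isClosed_closure

end Aux

section Unif

variable {E F G : Type*}
    [NormedAddCommGroup E] [NormedSpace ℝ E]
    [NormedAddCommGroup F] [NormedSpace ℝ F]
    [NormedAddCommGroup G] [NormedSpace ℝ G]

/-- A uniformly bounded sequence of operators converging pointwise to zero, composed with a
compact operator, converges to zero in norm. -/
lemma norm_comp_compact_tendsto_zero (D : ℕ → F →L[ℝ] G) (C : ℝ)
    (hC : ∀ i, ‖D i‖ ≤ C)
    (hpt : ∀ x : F, Tendsto (fun i => D i x) atTop (nhds 0))
    (T : E →L[ℝ] F) (hT : IsCompactOperator ⇑T) :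
    Tendsto (fun i => ‖(D i).comp T‖) atTop (nhds 0) := by
  have hC0 : (0 : ℝ) ≤ C := le_trans (norm_nonneg _) (hC 0)
  rw [Metric.tendsto_atTop]
  intro ε hε
  have hS : IsCompact (closure (⇑T '' closedBall (0 : E) 1)) :=
    hT.isCompact_closure_image_closedBall (𝕜₁ := ℝ) (f := (T : E →ₗ[ℝ] F)) 1
  set δ : ℝ := ε / (4 * (C + 1)) with hδdef
  have hδ : 0 < δ := by positivity
  obtain ⟨t, htfin, htsub⟩ := Metric.totallyBounded_iff.1 hS.totallyBounded δ hδ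
  have hev : ∀ᶠ i in atTop, ∀ y ∈ t, ‖D i y‖ < ε / 4 := by
    rw [eventually_all_finite htfin]
    intro y _
    have := (hpt y).eventually (Metric.ball_mem_nhds (0 : G) (by positivity : (0:ℝ) < ε / 4))
    filter_upwards [this] with i hi
    simpa [mem_ball_zero_iff] using hi
  obtain ⟨N, hN⟩ := eventually_atTop.1 hev
  refine ⟨N, fun i hi => ?_⟩
  have hb : ‖(D i).comp T‖ ≤ ε / 4 + C * δ := by
    apply ContinuousLinearMap.opNorm_le_of_unit_norm (by positivity)
    intro x hx
    have hxS : T x ∈ closure (⇑T '' closedBall (0 : E) 1) :=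
      subset_closure ⟨x, by simpa [mem_closedBall_zero_iff] using hx.le, rfl⟩
    obtain ⟨y, hyt, hyd⟩ : ∃ y ∈ t, T x ∈ ball y δ := by
      simpa using htsub hxS
    have h1 : ‖D i (T x - y)‖ ≤ C * δ := by
      calc ‖D i (T x - y)‖ ≤ ‖D i‖ * ‖T x - y‖ := (D i).le_opNorm _
        _ ≤ C * δ := by
            have : ‖T x - y‖ ≤ δ := by
              rw [← dist_eq_norm]; exact (mem_ball.1 hyd).le
            exact mul_le_mul (hC i) this (norm_nonneg _) hC0
    have h2 : ‖D i y‖ < ε / 4 := hN i hi y hyt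
    calc ‖((D i).comp T) x‖ = ‖D i (T x - y) + D i y‖ := by
          simp [map_sub]
      _ ≤ ‖D i (T x - y)‖ + ‖D i y‖ := norm_add_le _ _
      _ ≤ ε / 4 + C * δ := by linarith
  have hCδ : C * δ < ε / 2 := by
    have h1 : (C + 1) * δ = ε / 4 := by
      rw [hδdef]; field_simp
    have h2 : C * δ ≤ (C + 1) * δ := by nlinarith
    linarith
  have : ‖(D i).comp T‖ < ε := by
    calc ‖(D i).comp T‖ ≤ ε / 4 + C * δ := hb
      _ < ε / 4 + ε / 2 := by linarith
      _ < ε := by linarith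
  simpa [Real.dist_eq, abs_of_nonneg (norm_nonneg ((D i).comp T))] using this

end Unif

/-- Let `V, W, V', W'` be Hilbert spaces, `A_i : V → W` and `A'_i : V' → W'`
uniformly bounded sequences of bounded operators converging pointwise to `A` and `A'`
respectively, with the adjoints `A_i*` converging pointwise to `A*`, and let `K_i : W → V'` be
compact operators converging in operator norm to `K`. Then `A'_i ∘ K_i ∘ A_i → A' ∘ K ∘ A`
in operator norm. -/
theorem stmt_12 {V W V' W' : Type*}
    [NormedAddCommGroup V] [InnerProductSpace ℝ V] [CompleteSpace V]
    [NormedAddCommGroup W] [InnerProductSpace ℝ W] [CompleteSpace W]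
    [NormedAddCommGroup V'] [InnerProductSpace ℝ V'] [CompleteSpace V']
    [NormedAddCommGroup W'] [InnerProductSpace ℝ W'] [CompleteSpace W']
    (A : ℕ → V →L[ℝ] W) (Alim : V →L[ℝ] W)
    (A' : ℕ → V' →L[ℝ] W') (A'lim : V' →L[ℝ] W')
    (M : ℝ) (hM : ∀ i, ‖A i‖ ≤ M) (M' : ℝ) (hM' : ∀ i, ‖A' i‖ ≤ M')
    (hpt : ∀ v : V, Tendsto (fun i => A i v) atTop (nhds (Alim v)))
    (hpt' : ∀ v : V', Tendsto (fun i => A' i v) atTop (nhds (A'lim v)))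
    (hadj : ∀ w : W, Tendsto (fun i => ContinuousLinearMap.adjoint (A i) w) atTop
      (nhds (ContinuousLinearMap.adjoint Alim w)))
    (K : ℕ → W →L[ℝ] V') (Klim : W →L[ℝ] V')
    (hKcpt : ∀ i, IsCompactOperator ⇑(K i))
    (hKnorm : Tendsto (fun i => ‖K i - Klim‖) atTop (nhds 0)) :
    Tendsto (fun i => ‖((A' i).comp (K i)).comp (A i) - (A'lim.comp Klim).comp Alim‖)
      atTop (nhds 0) := by
  have hM0 : (0 : ℝ) ≤ M := le_trans (norm_nonneg _) (hM 0)
  have hM'0 : (0 : ℝ) ≤ M' := le_trans (norm_nonneg _) (hM' 0)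
  -- norm bounds on the limits
  have hAlim : ‖Alim‖ ≤ M := by
    apply ContinuousLinearMap.opNorm_le_bound _ hM0
    intro x
    have : Tendsto (fun i => ‖A i x‖) atTop (nhds ‖Alim x‖) := (hpt x).norm
    refine le_of_tendsto this (Eventually.of_forall fun i => ?_)
    calc ‖A i x‖ ≤ ‖A i‖ * ‖x‖ := (A i).le_opNorm x
      _ ≤ M * ‖x‖ := mul_le_mul_of_nonneg_right (hM i) (norm_nonneg x)
  have hA'lim : ‖A'lim‖ ≤ M' := by
    apply ContinuousLinearMap.opNorm_le_bound _ hM'0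
    intro x
    have : Tendsto (fun i => ‖A' i x‖) atTop (nhds ‖A'lim x‖) := (hpt' x).norm
    refine le_of_tendsto this (Eventually.of_forall fun i => ?_)
    calc ‖A' i x‖ ≤ ‖A' i‖ * ‖x‖ := (A' i).le_opNorm x
      _ ≤ M' * ‖x‖ := mul_le_mul_of_nonneg_right (hM' i) (norm_nonneg x)
  -- Klim is compact
  have hKtends : Tendsto K atTop (nhds Klim) :=
    tendsto_iff_norm_sub_tendsto_zero.2 hKnorm
  have hKlimcpt : IsCompactOperator ⇑Klim :=
    isCompactOperator_of_tendsto hKtends (Eventually.of_forall hKcpt)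
  -- the three error terms
  -- term 2 : ‖Klim ∘ (A i - Alim)‖ → 0, via adjoints
  have hKscpt : IsCompactOperator ⇑(ContinuousLinearMap.adjoint Klim) :=
    adjoint_isCompactOperator Klim hKlimcpt
  have hterm2 : Tendsto (fun i => ‖Klim.comp (A i - Alim)‖) atTop (nhds 0) := by
    have h := norm_comp_compact_tendsto_zero
      (fun i => ContinuousLinearMap.adjoint (A i) - ContinuousLinearMap.adjoint Alim)
      (2 * M)
      (fun i => by
        calc ‖ContinuousLinearMap.adjoint (A i) - ContinuousLinearMap.adjoint Alim‖
            ≤ ‖ContinuousLinearMap.adjoint (A i)‖ + ‖ContinuousLinearMap.adjoint Alim‖ :=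
              norm_sub_le _ _
          _ ≤ 2 * M := by
              rw [ContinuousLinearMap.adjoint.norm_map, ContinuousLinearMap.adjoint.norm_map]
              linarith [hM i, hAlim])
      (fun w => by
        have := (hadj w).sub_const (ContinuousLinearMap.adjoint Alim w)
        simpa using this)
      (ContinuousLinearMap.adjoint Klim) hKscpt
    refine h.congr fun i => ?_
    calc ‖(ContinuousLinearMap.adjoint (A i)
          - ContinuousLinearMap.adjoint Alim).comp (ContinuousLinearMap.adjoint Klim)‖
        = ‖(ContinuousLinearMap.adjoint (A i - Alim)).comp
            (ContinuousLinearMap.adjoint Klim)‖ := by rw [map_sub]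
      _ = ‖ContinuousLinearMap.adjoint (Klim.comp (A i - Alim))‖ := by
          rw [ContinuousLinearMap.adjoint_comp]
      _ = ‖Klim.comp (A i - Alim)‖ := ContinuousLinearMap.adjoint.norm_map _
  -- term 3 : ‖(A' i - A'lim) ∘ (Klim ∘ Alim)‖ → 0
  have hKAcpt : IsCompactOperator ⇑(Klim.comp Alim) := hKlimcpt.comp_clm Alim
  have hterm3 : Tendsto (fun i => ‖(A' i - A'lim).comp (Klim.comp Alim)‖) atTop (nhds 0) := by
    apply norm_comp_compact_tendsto_zero _ (2 * M')
      (fun i => by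
        calc ‖A' i - A'lim‖ ≤ ‖A' i‖ + ‖A'lim‖ := norm_sub_le _ _
          _ ≤ 2 * M' := by linarith [hM' i])
      (fun x => by
        have := (hpt' x).sub_const (A'lim x)
        simpa using this)
      _ hKAcpt
  -- assemble
  have hbound : ∀ i, ‖((A' i).comp (K i)).comp (A i) - (A'lim.comp Klim).comp Alim‖
      ≤ M' * (‖K i - Klim‖ * M) + M' * ‖Klim.comp (A i - Alim)‖
        + ‖(A' i - A'lim).comp (Klim.comp Alim)‖ := by
    intro i
    have hdecomp : ((A' i).comp (K i)).comp (A i) - (A'lim.comp Klim).comp Alim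
        = ((A' i).comp ((K i - Klim))).comp (A i)
          + (A' i).comp (Klim.comp (A i - Alim))
          + (A' i - A'lim).comp (Klim.comp Alim) := by
      ext x
      simp only [ContinuousLinearMap.add_apply, ContinuousLinearMap.comp_apply,
        ContinuousLinearMap.sub_apply, map_sub]
      abel
    rw [hdecomp]
    calc ‖((A' i).comp ((K i - Klim))).comp (A i)
          + (A' i).comp (Klim.comp (A i - Alim))
          + (A' i - A'lim).comp (Klim.comp Alim)‖
        ≤ ‖((A' i).comp ((K i - Klim))).comp (A i)‖
          + ‖(A' i).comp (Klim.comp (A i - Alim))‖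
          + ‖(A' i - A'lim).comp (Klim.comp Alim)‖ := norm_add₃_le
      _ ≤ M' * (‖K i - Klim‖ * M) + M' * ‖Klim.comp (A i - Alim)‖
          + ‖(A' i - A'lim).comp (Klim.comp Alim)‖ := by
          gcongr
          · calc ‖((A' i).comp ((K i - Klim))).comp (A i)‖
                ≤ ‖(A' i).comp (K i - Klim)‖ * ‖A i‖ := ContinuousLinearMap.opNorm_comp_le _ _
              _ ≤ (‖A' i‖ * ‖K i - Klim‖) * ‖A i‖ := by
                  gcongr; exact ContinuousLinearMap.opNorm_comp_le _ _
              _ ≤ M' * (‖K i - Klim‖ * M) := by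
                  rw [mul_assoc]
                  gcongr
                  · exact hM' i
                  · exact hM i
          · calc ‖(A' i).comp (Klim.comp (A i - Alim))‖
                ≤ ‖A' i‖ * ‖Klim.comp (A i - Alim)‖ := ContinuousLinearMap.opNorm_comp_le _ _
              _ ≤ M' * ‖Klim.comp (A i - Alim)‖ := by gcongr; exact hM' i
  have hlim : Tendsto (fun i => M' * (‖K i - Klim‖ * M) + M' * ‖Klim.comp (A i - Alim)‖
      + ‖(A' i - A'lim).comp (Klim.comp Alim)‖) atTop (nhds 0) := by
    have h1 : Tendsto (fun i => M' * (‖K i - Klim‖ * M)) atTop (nhds 0) := by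
      have := (hKnorm.mul_const M).const_mul M'
      simpa using this
    have h2 : Tendsto (fun i => M' * ‖Klim.comp (A i - Alim)‖) atTop (nhds 0) := by
      have := hterm2.const_mul M'
      simpa using this
    have := (h1.add h2).add hterm3
    simpa using this
  exact squeeze_zero (fun i => norm_nonneg _) hbound hlim
end

section
/- Let B be a set equipped with two topologies: a topology 𝒯 and a coarser Hausdorff topology 𝒯_w (every 𝒯_w-open set is 𝒯-open). Let C : B → ℝ, let P and Q be topological spaces, and let σ : P → B and τ : Q → B be maps that are continuous as maps into (B, 𝒯_w). Assume: (1) C is bounded below on σ(P) and bounded above on τ(Q); (2) whenever a sequence σ(p_i) converges in 𝒯_w to some y ∈ B, one has liminf_i C(σ(p_i)) ≥ C(y), and whenever τ(q_i) converges in 𝒯_w to some y ∈ B, one has limsup_i C(τ(q_i)) ≤ C(y); (3) whenever σ(p_i) converges in 𝒯_w to y and C(σ(p_i)) → C(y), the sequence (p_i) has a convergent subsequence in P, and likewise whenever τ(q_i) converges in 𝒯_w to y and C(τ(q_i)) → C(y), the sequence (q_i) has a convergent subsequence in Q; (4) every sequence in σ(P) on which C is bounded has a 𝒯_w-convergent subsequence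 with limit in B, and the same holds for sequences in τ(Q). Then the fiber product {(p,q) ∈ P × Q : σ(p) = τ(q)} is sequentially compact: every sequence (p_i, q_i) with σ(p_i) = τ(q_i) has a subsequence converging in P × Q to a point (p, q) with σ(p) = τ(q). -/
open Filter Topology

/-- Let `B` carry a topology `t` and a coarser Hausdorff ("weak") topology `tw`,
let `C : B → ℝ`, and let `σ : P → B`, `τ : Q → B` be weakly continuous maps from topological
spaces `P`, `Q` satisfying the sequential forms of Axioms 1–3 for a semi-infinite cycle in
`(B, C)` and in `(-B, -C)` respectively: `C` is bounded below on `σ(P)` and above on `τ(Q)`;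
`C` is weakly sequentially lower semicontinuous along `σ` and upper semicontinuous along `τ`;
weak convergence of the images with no loss of `C` forces subsequential convergence upstairs;
and sequences in the images with `C` bounded are weakly sequentially precompact. Then the fiber
product `{(p,q) : σ(p) = τ(q)}` is sequentially compact. -/
theorem stmt_13 {B P Q : Type*} (t tw : TopologicalSpace B)
    [TopologicalSpace P] [TopologicalSpace Q]
    (hcoarser : ∀ s : Set B, IsOpen[tw] s → IsOpen[t] s)
    (hT2 : @T2Space B tw)
    (C : B → ℝ) (σ : P → B) (τ : Q → B)
    (hσcont : Continuous[_, tw] σ) (hτcont : Continuous[_, tw] τ)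
    (hbelow : ∃ m : ℝ, ∀ p : P, m ≤ C (σ p))
    (habove : ∃ M : ℝ, ∀ q : Q, C (τ q) ≤ M)
    (hlsc : ∀ (p : ℕ → P) (y : B), Tendsto (fun i => σ (p i)) atTop (@nhds B tw y) →
      ∀ c : ℝ, c < C y → ∀ᶠ i in atTop, c < C (σ (p i)))
    (husc : ∀ (q : ℕ → Q) (y : B), Tendsto (fun i => τ (q i)) atTop (@nhds B tw y) →
      ∀ c : ℝ, C y < c → ∀ᶠ i in atTop, C (τ (q i)) < c)
    (hσcvg : ∀ (p : ℕ → P) (y : B), Tendsto (fun i => σ (p i)) atTop (@nhds B tw y) →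
      Tendsto (fun i => C (σ (p i))) atTop (nhds (C y)) →
      ∃ φ : ℕ → ℕ, StrictMono φ ∧ ∃ x : P, Tendsto (fun i => p (φ i)) atTop (nhds x))
    (hτcvg : ∀ (q : ℕ → Q) (y : B), Tendsto (fun i => τ (q i)) atTop (@nhds B tw y) →
      Tendsto (fun i => C (τ (q i))) atTop (nhds (C y)) →
      ∃ φ : ℕ → ℕ, StrictMono φ ∧ ∃ x : Q, Tendsto (fun i => q (φ i)) atTop (nhds x))
    (hσwcpt : ∀ p : ℕ → P, (∃ M : ℝ, ∀ i, |C (σ (p i))| ≤ M) →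
      ∃ φ : ℕ → ℕ, StrictMono φ ∧ ∃ y : B,
        Tendsto (fun i => σ (p (φ i))) atTop (@nhds B tw y))
    (hτwcpt : ∀ q : ℕ → Q, (∃ M : ℝ, ∀ i, |C (τ (q i))| ≤ M) →
      ∃ φ : ℕ → ℕ, StrictMono φ ∧ ∃ y : B,
        Tendsto (fun i => τ (q (φ i))) atTop (@nhds B tw y)) :
    ∀ (p : ℕ → P) (q : ℕ → Q), (∀ i, σ (p i) = τ (q i)) →
      ∃ φ : ℕ → ℕ, StrictMono φ ∧ ∃ (a : P) (b : Q), σ a = τ b ∧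
        Tendsto (fun i => p (φ i)) atTop (nhds a) ∧
        Tendsto (fun i => q (φ i)) atTop (nhds b) := by
  intro p q hpq
  obtain ⟨m, hm⟩ := hbelow
  obtain ⟨M, hM⟩ := habove
  have hbnd : ∃ M' : ℝ, ∀ i, |C (σ (p i))| ≤ M' := by
    refine ⟨max |m| |M|, fun i => abs_le.2 ⟨?_, ?_⟩⟩
    · exact le_trans (neg_le_neg (le_max_left _ _)) (le_trans (neg_abs_le m) (hm (p i)))
    · exact le_trans (by rw [hpq i]; exact hM (q i))
        (le_trans (le_abs_self M) (le_max_right _ _))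
  obtain ⟨φ1, hφ1, y, hy⟩ := hσwcpt p hbnd
  have hy' : Tendsto (fun i => τ (q (φ1 i))) atTop (@nhds B tw y) := by
    simpa only [hpq] using hy
  have hC : Tendsto (fun i => C (σ (p (φ1 i)))) atTop (nhds (C y)) := by
    refine tendsto_order.2 ⟨fun c hc => hlsc (fun i => p (φ1 i)) y hy c hc, fun c hc => ?_⟩
    simpa only [hpq] using husc (fun i => q (φ1 i)) y hy' c hc
  obtain ⟨φ2, hφ2, a, ha⟩ := hσcvg (fun i => p (φ1 i)) y hy hC
  have hy2 : Tendsto (fun i => τ (q (φ1 (φ2 i)))) atTop (@nhds B tw y) :=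
    hy'.comp hφ2.tendsto_atTop
  have hC2 : Tendsto (fun i => C (τ (q (φ1 (φ2 i))))) atTop (nhds (C y)) := by
    simpa only [hpq, Function.comp_def] using hC.comp hφ2.tendsto_atTop
  obtain ⟨φ3, hφ3, b, hb⟩ := hτcvg (fun i => q (φ1 (φ2 i))) y hy2 hC2
  refine ⟨fun i => φ1 (φ2 (φ3 i)), (hφ1.comp hφ2).comp hφ3, a, b, ?_, ?_, hb⟩
  · letI := tw
    haveI := hT2
    have h1 : Tendsto (fun i => σ (p (φ1 (φ2 (φ3 i))))) atTop (nhds (σ a)) :=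
      (hσcont.tendsto a).comp (ha.comp hφ3.tendsto_atTop)
    have h2 : Tendsto (fun i => σ (p (φ1 (φ2 (φ3 i))))) atTop (nhds y) :=
      hy.comp (hφ2.tendsto_atTop.comp hφ3.tendsto_atTop)
    have h3 : Tendsto (fun i => τ (q (φ1 (φ2 (φ3 i))))) atTop (nhds (τ b)) :=
      (hτcont.tendsto b).comp hb
    have h4 : Tendsto (fun i => τ (q (φ1 (φ2 (φ3 i))))) atTop (nhds y) :=
      hy2.comp hφ3.tendsto_atTop
    rw [tendsto_nhds_unique h1 h2, tendsto_nhds_unique h3 h4]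
  · exact ha.comp hφ3.tendsto_atTop
end
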